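/- (Remark 2.6) Assume γᵢ > 0 for all i, and let θ := ((1−β_min)∨(1/2))/β_max. Then for every η > 0 there exist positive constants κ̆₀ and κ̆₁, depending only on η and the parameters, such that the function V̆(x) := exp(ηθΨ(−x) + ηΨ(x)) satisfies L_u V̆(x) ≤ κ̆₀ − κ̆₁·‖x‖₁·V̆(x) for all (x,u) ∈ K₀⁺ × Δ. -/

import Mathlib

open scoped BigOperators

/-- The piecewise function ψ. -/
noncomputable def psiFn (t : ℝ) : ℝ :=
  if t ≤ -1 then -(1/2)
  else if t ≤ 0 then (t+1)^3 - (1/2)*(t+1)^4 - 1/2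
  else t

/-- ψ_ε(t) := ψ(εt). -/
noncomputable def psiE (ε t : ℝ) : ℝ := psiFn (ε * t)

/-- Ψ(x) := Σᵢ ψ(xᵢ)/μᵢ. -/
noncomputable def bigPsi {m : ℕ} (μ : Fin m → ℝ) (x : Fin m → ℝ) : ℝ :=
  ∑ i, psiFn (x i) / μ i

/-- Ψ_ε(x) := Σᵢ ψ_ε(xᵢ)/μᵢ. -/
noncomputable def bigPsiE {m : ℕ} (μ : Fin m → ℝ) (ε : ℝ) (x : Fin m → ℝ) : ℝ :=
  ∑ i, psiE ε (x i) / μ i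

/-- The drift b(x,u) with bᵢ(x,u) = −ρμᵢ/m − μᵢ(xᵢ − ⟨e,x⟩⁺uᵢ) − γᵢ⟨e,x⟩⁺uᵢ. -/
noncomputable def drift {m : ℕ} (ρ : ℝ) (μ γ : Fin m → ℝ) (x u : Fin m → ℝ) :
    Fin m → ℝ :=
  fun i => -(ρ * μ i / m) - μ i * (x i - max (∑ j, x j) 0 * u i)
    - γ i * max (∑ j, x j) 0 * u i

/-- The extended generator L_u f(x) = Σᵢ λ̃ᵢ ∂²f/∂xᵢ²(x) + ⟨b(x,u), ∇f(x)⟩. -/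
noncomputable def genL {m : ℕ} (lam : Fin m → ℝ) (ρ : ℝ) (μ γ : Fin m → ℝ)
    (u : Fin m → ℝ) (f : (Fin m → ℝ) → ℝ) (x : Fin m → ℝ) : ℝ :=
  ∑ i, lam i * fderiv ℝ (fun y => fderiv ℝ f y (Pi.single i 1)) x (Pi.single i 1)
    + fderiv ℝ f x (drift ρ μ γ x u)

/-- ‖x‖₁ = Σᵢ|xᵢ|. -/
noncomputable def norm1 {m : ℕ} (x : Fin m → ℝ) : ℝ := ∑ i, |x i|

/-- ‖x⁻‖₁ = Σᵢ max(−xᵢ,0). -/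
noncomputable def norm1neg {m : ℕ} (x : Fin m → ℝ) : ℝ := ∑ i, max (-(x i)) 0


noncomputable def psiD (t : ℝ) : ℝ :=
  if t ≤ -1 then 0
  else if t ≤ 0 then 3*(t+1)^2 - 2*(t+1)^3 else 1

noncomputable def psiDD (t : ℝ) : ℝ :=
  if t ≤ -1 then 0
  else if t ≤ 0 then 6*(t+1) - 6*(t+1)^2 else 0

lemma polyP_hasDerivAt (t : ℝ) :
    HasDerivAt (fun s : ℝ => (s+1)^3 - (1/2)*(s+1)^4 - 1/2)
      (3*(t+1)^2 - 2*(t+1)^3) t := by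
  have h1 : HasDerivAt (fun s : ℝ => s + 1) 1 t := (hasDerivAt_id t).add_const 1
  have h3 := h1.pow 3
  have h4 := (h1.pow 4).const_mul (1/2 : ℝ)
  refine ((h3.sub h4).sub_const (1/2)).congr_deriv ?_
  norm_num
  ring

lemma polyD_hasDerivAt (t : ℝ) :
    HasDerivAt (fun s : ℝ => 3*(s+1)^2 - 2*(s+1)^3)
      (6*(t+1) - 6*(t+1)^2) t := by
  have h1 : HasDerivAt (fun s : ℝ => s + 1) 1 t := (hasDerivAt_id t).add_const 1
  have h2 := (h1.pow 2).const_mul (3 : ℝ)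
  have h3 := (h1.pow 3).const_mul (2 : ℝ)
  refine (h2.sub h3).congr_deriv ?_
  norm_num
  ring

lemma hdwa_left {f g : ℝ → ℝ} {d a : ℝ} (hg : HasDerivAt g d a)
    (heq : ∀ s ∈ Set.Icc (a-1) a, f s = g s) :
    HasDerivWithinAt f d (Set.Iic a) a := by
  have h2 : HasDerivWithinAt f d (Set.Icc (a-1) a) a :=
    hg.hasDerivWithinAt.congr heq (heq a ⟨by linarith, le_refl a⟩)
  refine h2.mono_of_mem_nhdsWithin ?_
  have h3 : Set.Iic a ∩ Set.Ici (a-1) = Set.Icc (a-1) a := by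
    ext s; simp [Set.mem_Icc, and_comm]
  rw [← h3]
  exact inter_mem_nhdsWithin _ (Ici_mem_nhds (by linarith))

lemma hdwa_right {f g : ℝ → ℝ} {d a : ℝ} (hg : HasDerivAt g d a)
    (heq : ∀ s ∈ Set.Icc a (a+1), f s = g s) :
    HasDerivWithinAt f d (Set.Ici a) a := by
  have h2 : HasDerivWithinAt f d (Set.Icc a (a+1)) a :=
    hg.hasDerivWithinAt.congr heq (heq a ⟨le_refl a, by linarith⟩)
  refine h2.mono_of_mem_nhdsWithin ?_
  have h3 : Set.Ici a ∩ Set.Iic (a+1) = Set.Icc a (a+1) := by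
    ext s; simp [Set.mem_Icc]
  rw [← h3]
  exact inter_mem_nhdsWithin _ (Iic_mem_nhds (by linarith))

lemma glue {f : ℝ → ℝ} {d a : ℝ}
    (hl : HasDerivWithinAt f d (Set.Iic a) a)
    (hr : HasDerivWithinAt f d (Set.Ici a) a) : HasDerivAt f d a := by
  have := hl.union hr
  rwa [Set.Iic_union_Ici, hasDerivWithinAt_univ] at this

lemma psiFn_hasDerivAt (t : ℝ) : HasDerivAt psiFn (psiD t) t := by
  rcases lt_trichotomy t (-1) with h | h | h
  · have he : psiFn =ᶠ[nhds t] fun _ => -(1/2 : ℝ) := by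
      filter_upwards [Iio_mem_nhds h] with s hs
      simp [psiFn, (Set.mem_Iio.mp hs).le]
    have h0 : HasDerivAt (fun _ : ℝ => -(1/2 : ℝ)) 0 t := hasDerivAt_const t _
    have := h0.congr_of_eventuallyEq he
    simpa [psiD, h.le] using this
  · subst h
    have hl : HasDerivWithinAt psiFn 0 (Set.Iic (-1 : ℝ)) (-1) := by
      refine hdwa_left (hasDerivAt_const _ (-(1/2:ℝ))) (fun s hs => ?_)
      simp [psiFn, hs.2]
    have hr : HasDerivWithinAt psiFn 0 (Set.Ici (-1 : ℝ)) (-1) := by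
      have hp : HasDerivAt (fun s : ℝ => (s+1)^3 - (1/2)*(s+1)^4 - 1/2) 0 (-1) := by
        have := polyP_hasDerivAt (-1); norm_num at this ⊢; exact this
      refine hdwa_right hp (fun s hs => ?_)
      rcases hs with ⟨h1, h2⟩
      rcases eq_or_lt_of_le h1 with h1' | h1'
      · simp [psiFn, ← h1']
      · have h2' : s ≤ 0 := by linarith
        simp [psiFn, not_le.mpr h1', h2']
    simpa [psiD] using glue hl hr
  · rcases lt_trichotomy t 0 with h0 | h0 | h0
    · have he : psiFn =ᶠ[nhds t] fun s => (s+1)^3 - (1/2)*(s+1)^4 - 1/2 := by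
        filter_upwards [Ioo_mem_nhds h h0] with s hs
        simp [psiFn, not_le.mpr hs.1, hs.2.le]
      have := (polyP_hasDerivAt t).congr_of_eventuallyEq he
      simpa [psiD, not_le.mpr h, h0.le] using this
    · subst h0
      have hl : HasDerivWithinAt psiFn 1 (Set.Iic (0 : ℝ)) 0 := by
        have hp : HasDerivAt (fun s : ℝ => (s+1)^3 - (1/2)*(s+1)^4 - 1/2) 1 0 := by
          have := polyP_hasDerivAt 0; norm_num at this ⊢; exact this
        refine hdwa_left hp (fun s hs => ?_)
        rcases hs with ⟨h1, h2⟩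
        norm_num at h1
        rcases eq_or_lt_of_le h1 with h1' | h1'
        · norm_num [psiFn, ← h1']
        · simp [psiFn, not_le.mpr h1', h2]
      have hr : HasDerivWithinAt psiFn 1 (Set.Ici (0 : ℝ)) 0 := by
        refine hdwa_right (hasDerivAt_id 0) (fun s hs => ?_)
        rcases hs with ⟨h1, h2⟩
        rcases eq_or_lt_of_le h1 with h1' | h1'
        · norm_num [psiFn, ← h1']
        · have hn1 : ¬ s ≤ -1 := by push_neg; linarith
          simp [psiFn, not_le.mpr h1', hn1]
      have hg := glue hl hr
      have h1 : psiD 0 = 1 := by norm_num [psiD]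
      rwa [h1]
    · have he : psiFn =ᶠ[nhds t] fun s => s := by
        filter_upwards [Ioi_mem_nhds h0] with s hs
        have hs' : (0:ℝ) < s := Set.mem_Ioi.mp hs
        have hn1 : ¬ s ≤ -1 := by push_neg; linarith
        simp [psiFn, not_le.mpr hs', hn1]
      have := (hasDerivAt_id t).congr_of_eventuallyEq he
      have hn1 : ¬ t ≤ -1 := by push_neg; linarith
      simpa [psiD, not_le.mpr h0, hn1] using this

lemma psiD_hasDerivAt (t : ℝ) : HasDerivAt psiD (psiDD t) t := by
  rcases lt_trichotomy t (-1) with h | h | h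
  · have he : psiD =ᶠ[nhds t] fun _ => (0 : ℝ) := by
      filter_upwards [Iio_mem_nhds h] with s hs
      simp [psiD, (Set.mem_Iio.mp hs).le]
    have := (hasDerivAt_const t (0:ℝ)).congr_of_eventuallyEq he
    simpa [psiDD, h.le] using this
  · subst h
    have hl : HasDerivWithinAt psiD 0 (Set.Iic (-1 : ℝ)) (-1) := by
      refine hdwa_left (hasDerivAt_const _ (0:ℝ)) (fun s hs => ?_)
      simp [psiD, hs.2]
    have hr : HasDerivWithinAt psiD 0 (Set.Ici (-1 : ℝ)) (-1) := by
      have hp : HasDerivAt (fun s : ℝ => 3*(s+1)^2 - 2*(s+1)^3) 0 (-1) := by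
        have := polyD_hasDerivAt (-1); norm_num at this; exact this
      refine hdwa_right hp (fun s hs => ?_)
      rcases hs with ⟨h1, h2⟩
      rcases eq_or_lt_of_le h1 with h1' | h1'
      · simp [psiD, ← h1']
      · have h2' : s ≤ 0 := by linarith
        simp [psiD, not_le.mpr h1', h2']
    simpa [psiDD] using glue hl hr
  · rcases lt_trichotomy t 0 with h0 | h0 | h0
    · have he : psiD =ᶠ[nhds t] fun s => 3*(s+1)^2 - 2*(s+1)^3 := by
        filter_upwards [Ioo_mem_nhds h h0] with s hs
        simp [psiD, not_le.mpr hs.1, hs.2.le]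
      have := (polyD_hasDerivAt t).congr_of_eventuallyEq he
      simpa [psiDD, not_le.mpr h, h0.le] using this
    · subst h0
      have hl : HasDerivWithinAt psiD 0 (Set.Iic (0 : ℝ)) 0 := by
        have hp : HasDerivAt (fun s : ℝ => 3*(s+1)^2 - 2*(s+1)^3) 0 0 := by
          have := polyD_hasDerivAt 0; norm_num at this; exact this
        refine hdwa_left hp (fun s hs => ?_)
        rcases hs with ⟨h1, h2⟩
        norm_num at h1
        rcases eq_or_lt_of_le h1 with h1' | h1'
        · norm_num [psiD, ← h1']
        · simp [psiD, not_le.mpr h1', h2]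
      have hr : HasDerivWithinAt psiD 0 (Set.Ici (0 : ℝ)) 0 := by
        refine hdwa_right (hasDerivAt_const _ (1:ℝ)) (fun s hs => ?_)
        rcases hs with ⟨h1, h2⟩
        rcases eq_or_lt_of_le h1 with h1' | h1'
        · norm_num [psiD, ← h1']
        · have hn1 : ¬ s ≤ -1 := by push_neg; linarith
          simp [psiD, not_le.mpr h1', hn1]
      simpa [psiDD] using glue hl hr
    · have he : psiD =ᶠ[nhds t] fun _ => (1:ℝ) := by
        filter_upwards [Ioi_mem_nhds h0] with s hs
        have hs' : (0:ℝ) < s := Set.mem_Ioi.mp hs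
        have hn1 : ¬ s ≤ -1 := by push_neg; linarith
        simp [psiD, not_le.mpr hs', hn1]
      have := (hasDerivAt_const t (1:ℝ)).congr_of_eventuallyEq he
      have hn1 : ¬ t ≤ -1 := by push_neg; linarith
      simpa [psiDD, not_le.mpr h0, hn1] using this

lemma psiD_nonneg (t : ℝ) : 0 ≤ psiD t := by
  unfold psiD
  split_ifs with h1 h2
  · exact le_rfl
  · push_neg at h1; nlinarith
  · norm_num

lemma psiD_le_one (t : ℝ) : psiD t ≤ 1 := by
  unfold psiD
  split_ifs with h1 h2
  · norm_num
  · push_neg at h1; nlinarith [sq_nonneg (t+1), sq_nonneg t]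
  · exact le_rfl

lemma psiDD_nonneg (t : ℝ) : 0 ≤ psiDD t := by
  unfold psiDD
  split_ifs with h1 h2
  · exact le_rfl
  · push_neg at h1; nlinarith
  · exact le_rfl

lemma psiDD_le (t : ℝ) : psiDD t ≤ 3/2 := by
  unfold psiDD
  split_ifs with h1 h2
  · norm_num
  · push_neg at h1; nlinarith [sq_nonneg (t + 1/2)]
  · norm_num

lemma mul_psiD_ge (t : ℝ) : max t 0 - 1 ≤ t * psiD t := by
  unfold psiD
  split_ifs with h1 h2
  · have : max t 0 = 0 := max_eq_right (by linarith)
    rw [this]; norm_num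
  · push_neg at h1
    have hmax : max t 0 = 0 := max_eq_right h2
    have hle1 : 3*(t+1)^2 - 2*(t+1)^3 ≤ 1 := by nlinarith [sq_nonneg (t+1), sq_nonneg t]
    have hge0 : 0 ≤ 3*(t+1)^2 - 2*(t+1)^3 := by nlinarith
    rw [hmax]
    nlinarith
  · push_neg at h2
    have : max t 0 = t := max_eq_left h2.le
    rw [this]; linarith

lemma psiFn_le (t : ℝ) : psiFn t ≤ max t 0 := by
  unfold psiFn
  split_ifs with h1 h2
  · have : (0:ℝ) ≤ max t 0 := le_max_right t 0
    linarith
  · push_neg at h1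
    have : (0:ℝ) ≤ max t 0 := le_max_right t 0
    nlinarith [sq_nonneg (t+1), sq_nonneg (t+1-1)]
  · push_neg at h2
    rw [max_eq_left h2.le]

section FD
variable {m : ℕ} (c d : Fin m → ℝ)

noncomputable def Ffun (y : Fin m → ℝ) : ℝ :=
  ∑ i, (c i * psiFn (y i) + d i * psiFn (-(y i)))

noncomputable def Gfun (i : Fin m) (s : ℝ) : ℝ := c i * psiD s - d i * psiD (-s)

noncomputable def GDfun (i : Fin m) (s : ℝ) : ℝ := c i * psiDD s + d i * psiDD (-s)

noncomputable def Lmap (x : Fin m → ℝ) : (Fin m → ℝ) →L[ℝ] ℝ :=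
  ∑ i, (Gfun c d i (x i)) • (ContinuousLinearMap.proj i :
    (Fin m → ℝ) →L[ℝ] ℝ)

lemma Lmap_apply (x v : Fin m → ℝ) : Lmap c d x v = ∑ i, Gfun c d i (x i) * v i := by
  simp [Lmap]

lemma Lmap_single (x : Fin m → ℝ) (i : Fin m) :
    Lmap c d x (Pi.single i 1) = Gfun c d i (x i) := by
  rw [Lmap_apply]
  rw [Finset.sum_eq_single i]
  · simp
  · intro j _ hj; rw [Pi.single_eq_of_ne hj, mul_zero]
  · intro h; exact absurd (Finset.mem_univ i) h

lemma coord_hasFDerivAt (x : Fin m → ℝ) (i : Fin m) {g : ℝ → ℝ} {g' : ℝ}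
    (hg : HasDerivAt g g' (x i)) :
    HasFDerivAt (fun y : Fin m → ℝ => g (y i))
      (g' • (ContinuousLinearMap.proj i : (Fin m → ℝ) →L[ℝ] ℝ)) x := by
  have hp : HasFDerivAt (fun y : Fin m → ℝ => y i)
      (ContinuousLinearMap.proj i : (Fin m → ℝ) →L[ℝ] ℝ) x :=
    (ContinuousLinearMap.proj i : (Fin m → ℝ) →L[ℝ] ℝ).hasFDerivAt
  exact hg.comp_hasFDerivAt x hp

lemma negcoord_hasDerivAt {g : ℝ → ℝ} {g' : ℝ} (t : ℝ)
    (hg : HasDerivAt g g' (-t)) :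
    HasDerivAt (fun s : ℝ => g (-s)) (-g') t := by
  have := hg.comp t (hasDerivAt_neg t)
  simpa [mul_comm, Function.comp_def] using this

lemma Ffun_hasFDerivAt (x : Fin m → ℝ) :
    HasFDerivAt (Ffun c d) (Lmap c d x) x := by
  have h : ∀ i : Fin m, HasFDerivAt
      (fun y : Fin m → ℝ => c i * psiFn (y i) + d i * psiFn (-(y i)))
      ((Gfun c d i (x i)) • (ContinuousLinearMap.proj i :
        (Fin m → ℝ) →L[ℝ] ℝ)) x := by
    intro i
    have h1 : HasFDerivAt (fun y : Fin m → ℝ => psiFn (y i))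
        ((psiD (x i)) • (ContinuousLinearMap.proj i : (Fin m → ℝ) →L[ℝ] ℝ)) x :=
      coord_hasFDerivAt x i (psiFn_hasDerivAt (x i))
    have h2 : HasFDerivAt (fun y : Fin m → ℝ => psiFn (-(y i)))
        ((-psiD (-(x i))) • (ContinuousLinearMap.proj i : (Fin m → ℝ) →L[ℝ] ℝ)) x :=
      coord_hasFDerivAt x i (negcoord_hasDerivAt (x i) (psiFn_hasDerivAt (-(x i))))
    have := (h1.const_mul (c i)).add (h2.const_mul (d i))
    refine this.congr_fderiv ?_
    rw [smul_smul, smul_smul, ← add_smul]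
    congr 1
    simp [Gfun]
    ring
  have := HasFDerivAt.fun_sum (fun i (_ : i ∈ Finset.univ) => h i)
  simp only [Lmap]
  exact this

lemma Vfun_hasFDerivAt (x : Fin m → ℝ) :
    HasFDerivAt (fun y => Real.exp (Ffun c d y))
      (Real.exp (Ffun c d x) • Lmap c d x) x :=
  (Real.hasDerivAt_exp (Ffun c d x)).comp_hasFDerivAt x (Ffun_hasFDerivAt c d x)

lemma fderiv_V (x : Fin m → ℝ) :
    fderiv ℝ (fun y => Real.exp (Ffun c d y)) x
      = Real.exp (Ffun c d x) • Lmap c d x :=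
  (Vfun_hasFDerivAt c d x).fderiv

lemma inner_fn_eq (i : Fin m) :
    (fun y => fderiv ℝ (fun z => Real.exp (Ffun c d z)) y (Pi.single i 1))
      = fun y => Real.exp (Ffun c d y) * Gfun c d i (y i) := by
  funext y
  rw [fderiv_V]
  simp [Lmap_single]

lemma second_deriv (x : Fin m → ℝ) (i : Fin m) :
    fderiv ℝ (fun y => fderiv ℝ (fun z => Real.exp (Ffun c d z)) y (Pi.single i 1))
        x (Pi.single i 1)
      = Real.exp (Ffun c d x) * (Gfun c d i (x i) ^ 2 + GDfun c d i (x i)) := by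
  rw [inner_fn_eq]
  have hG : HasFDerivAt (fun y : Fin m → ℝ => Gfun c d i (y i))
      ((GDfun c d i (x i)) • (ContinuousLinearMap.proj i :
        (Fin m → ℝ) →L[ℝ] ℝ)) x := by
    have hg : HasDerivAt (fun s => Gfun c d i s) (GDfun c d i (x i)) (x i) := by
      have h1 := (psiD_hasDerivAt (x i)).const_mul (c i)
      have h2 := (negcoord_hasDerivAt (x i) (psiD_hasDerivAt (-(x i)))).const_mul (d i)
      have := h1.sub h2
      refine this.congr_deriv ?_
      simp only [GDfun]
      ring
    exact coord_hasFDerivAt x i hg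
  have hprod := (Vfun_hasFDerivAt c d x).mul hG
  rw [HasFDerivAt.fderiv (f := fun y => Real.exp (Ffun c d y) * Gfun c d i (y i)) hprod]
  simp [Lmap_single, Pi.single_eq_same]
  ring

lemma fderiv_V_apply (x v : Fin m → ℝ) :
    fderiv ℝ (fun y => Real.exp (Ffun c d y)) x v
      = Real.exp (Ffun c d x) * ∑ i, Gfun c d i (x i) * v i := by
  rw [fderiv_V, ContinuousLinearMap.smul_apply, Lmap_apply]
  simp
end FD


/-! ### Elementary estimate lemmas -/

lemma key_lemma (η M A β p q : ℝ) (hη : 0 < η) (hM : 0 < M) (hA : 0 ≤ A)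
    (hβlb : 1 - β ≤ M) (hABound : (β - 1) * A ≤ η * M)
    (hp0 : 0 ≤ p) (hp1 : p ≤ 1) (hq0 : 0 ≤ q) (hq1 : q ≤ 1) :
    (1 - β) * (η * p - A * q) ≤ η * M := by
  rcases le_or_gt (1 - β) 0 with h | h
  · rcases le_or_gt 0 (η * p - A * q) with hw | hw
    · have h0 : (1-β)*(η*p - A*q) ≤ 0 := mul_nonpos_of_nonpos_of_nonneg h hw
      nlinarith
    · have hb : 0 ≤ β - 1 := by linarith
      have h1 : -(η*p - A*q) ≤ A*q := by nlinarith
      have h2 : A*q ≤ A := by nlinarith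
      nlinarith [mul_le_mul_of_nonneg_left h1 hb, mul_le_mul_of_nonneg_left h2 hb]
  · rcases le_or_gt 0 (η * p - A * q) with hw | hw
    · have hw2 : η*p - A*q ≤ η := by nlinarith
      have h3 : (1-β)*(η*p-A*q) ≤ M*(η*p-A*q) := mul_le_mul_of_nonneg_right hβlb hw
      nlinarith
    · have h0 : (1-β)*(η*p-A*q) ≤ 0 := mul_nonpos_of_nonneg_of_nonpos h.le hw.le
      nlinarith

lemma per_i_bound (η A M r μi γi Sui xi : ℝ) (hμ : 0 < μi) (hη : 0 < η) (hA : 0 < A)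
    (hSu : 0 ≤ Sui)
    (hkey : (1 - γi/μi) * (η * psiD xi - A * psiD (-xi)) ≤ η * M) :
    (η/μi * psiD xi - A/μi * psiD (-xi)) * (-(r * μi) - μi*(xi - Sui) - γi*Sui)
      ≤ |r| * (η + A) + (η + A) - η * max xi 0 - A * max (-xi) 0 + η*M*Sui := by
  have hp0 := psiD_nonneg xi
  have hp1 := psiD_le_one xi
  have hq0 := psiD_nonneg (-xi)
  have hq1 := psiD_le_one (-xi)
  set p := psiD xi with hp
  set q := psiD (-xi) with hq
  have hμ' : μi ≠ 0 := ne_of_gt hμ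
  have hid : (η/μi * p - A/μi * q) * (-(r*μi) - μi*(xi - Sui) - γi*Sui)
      = (η*p - A*q)*(-r) + (η*p - A*q)*(-xi) + Sui*((1 - γi/μi)*(η*p - A*q)) := by
    field_simp
    ring
  have t1 : (η*p - A*q)*(-r) ≤ |r| * (η+A) := by
    have h1 : ((η + A) - (η*p - A*q)) * (|r| - r) ≥ 0 :=
      mul_nonneg (by nlinarith) (by linarith [le_abs_self r])
    have h2 : ((η + A) + (η*p - A*q)) * (|r| + r) ≥ 0 :=
      mul_nonneg (by nlinarith) (by linarith [neg_abs_le r])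
    nlinarith [h1, h2]
  have hxp := mul_psiD_ge xi
  have hxq := mul_psiD_ge (-xi)
  have t2 : (η*p - A*q)*(-xi) ≤ (η+A) - η*max xi 0 - A*max (-xi) 0 := by
    nlinarith [mul_le_mul_of_nonneg_left hxp hη.le, mul_le_mul_of_nonneg_left hxq hA.le]
  have t3 : Sui*((1 - γi/μi)*(η*p - A*q)) ≤ Sui*(η*M) :=
    mul_le_mul_of_nonneg_left hkey hSu
  rw [hid]
  nlinarith [t1, t2, t3]

lemma so_bound (η A μi s : ℝ) (hη : 0 < η) (hA : 0 < A) (hμ : 0 < μi) :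
    (η/μi * psiD s - A/μi * psiD (-s))^2 + (η/μi * psiDD s + A/μi * psiDD (-s))
      ≤ ((η+A)/μi)^2 + (3/2)*((η+A)/μi) := by
  have hp0 := psiD_nonneg s
  have hp1 := psiD_le_one s
  have hq0 := psiD_nonneg (-s)
  have hq1 := psiD_le_one (-s)
  have hd1 := psiDD_nonneg s
  have hd2 := psiDD_nonneg (-s)
  have hd3 := psiDD_le s
  have hd4 := psiDD_le (-s)
  have hμη : 0 < η/μi := by positivity
  have hμA : 0 < A/μi := by positivity
  have h1 : (η/μi * psiD s - A/μi * psiD (-s))^2 ≤ ((η+A)/μi)^2 := by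
    have hub : η/μi * psiD s - A/μi * psiD (-s) ≤ (η+A)/μi := by
      rw [add_div]
      nlinarith
    have hlb : -((η+A)/μi) ≤ η/μi * psiD s - A/μi * psiD (-s) := by
      rw [add_div]
      nlinarith
    exact sq_le_sq' hlb hub
  have h2 : η/μi * psiDD s + A/μi * psiDD (-s) ≤ (3/2)*((η+A)/μi) := by
    rw [add_div]
    nlinarith
  linarith

lemma abs_eq_posneg (t : ℝ) : |t| = max t 0 + max (-t) 0 := by
  rcases le_total t 0 with h | h
  · rw [abs_of_nonpos h, max_eq_right h, max_eq_left (by linarith)]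
    ring
  · rw [abs_of_nonneg h, max_eq_left h, max_eq_right (by linarith)]
    ring

/-- Remark 2.6: for every η > 0 there exist κ̆₀, κ̆₁ > 0 such that
V̆(x) = exp(ηθΨ(−x)+ηΨ(x)), with θ = ((1−β_min)∨(1/2))/β_max, satisfies
L_u V̆(x) ≤ κ̆₀ − κ̆₁‖x‖₁V̆(x) on K₀⁺ × Δ. -/
theorem stmt10 {m : ℕ} (hm : 1 ≤ m) (ρ : ℝ) (μ γ lam : Fin m → ℝ)
    (hμ : ∀ i, 0 < μ i) (hγ : ∀ i, 0 < γ i) (hlam : ∀ i, 0 < lam i)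
    (hsum : ∑ i, lam i / μ i = 1)
    (βmax βmin : ℝ)
    (hβmax : IsGreatest (Set.range fun i => γ i / μ i) βmax)
    (hβmin : IsLeast (Set.range fun i => γ i / μ i) βmin) :
    ∀ η : ℝ, 0 < η →
      ∃ κ₀ > (0:ℝ), ∃ κ₁ > (0:ℝ), ∀ x u : Fin m → ℝ, 0 ≤ ∑ i, x i →
        u ∈ stdSimplex ℝ (Fin m) →
        genL lam ρ μ γ u
            (fun y => Real.exp (η * (max (1 - βmin) (1/2) / βmax) * bigPsi μ (-y)
              + η * bigPsi μ y)) x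
          ≤ κ₀ - κ₁ * norm1 x
              * Real.exp (η * (max (1 - βmin) (1/2) / βmax) * bigPsi μ (-x)
                  + η * bigPsi μ x) := by
  intro η hη
  obtain ⟨⟨i0, hi0⟩, hub⟩ := hβmax
  obtain ⟨⟨i1, hi1⟩, hlb⟩ := hβmin
  have hβmax_pos : 0 < βmax := hi0 ▸ div_pos (hγ i0) (hμ i0)
  have hβmin_pos : 0 < βmin := hi1 ▸ div_pos (hγ i1) (hμ i1)
  have hβi_ub : ∀ i, γ i / μ i ≤ βmax := fun i => hub ⟨i, rfl⟩
  have hβi_lb : ∀ i, βmin ≤ γ i / μ i := fun i => hlb ⟨i, rfl⟩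
  obtain ⟨M, hMdef⟩ : ∃ t : ℝ, t = max (1 - βmin) (1/2 : ℝ) := ⟨_, rfl⟩
  have hM0 : 0 < M := by rw [hMdef]; exact lt_of_lt_of_le one_half_pos (le_max_right _ _)
  have hM1 : M < 1 := by rw [hMdef]; exact max_lt (by linarith) (by norm_num)
  obtain ⟨A, hAdef⟩ : ∃ t : ℝ, t = η * (M / βmax) := ⟨_, rfl⟩
  have hA : 0 < A := by rw [hAdef]; exact mul_pos hη (div_pos hM0 hβmax_pos)
  obtain ⟨cc, hccdef⟩ : ∃ t : Fin m → ℝ, t = fun i => η / μ i := ⟨_, rfl⟩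
  obtain ⟨dd, hdddef⟩ : ∃ t : Fin m → ℝ, t = fun i => A / μ i := ⟨_, rfl⟩
  have hexp : ∀ y : Fin m → ℝ,
      η * (max (1 - βmin) (1/2) / βmax) * bigPsi μ (-y) + η * bigPsi μ y
        = Ffun cc dd y := by
    intro y
    simp only [bigPsi, Ffun, Finset.mul_sum, ← Finset.sum_add_distrib]
    refine Finset.sum_congr rfl (fun i _ => ?_)
    simp only [Pi.neg_apply, hccdef, hdddef, hAdef, hMdef]
    ring
  have hfun : (fun y : Fin m → ℝ =>
      Real.exp (η * (max (1 - βmin) (1/2) / βmax) * bigPsi μ (-y) + η * bigPsi μ y))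
      = fun y => Real.exp (Ffun cc dd y) := by
    funext y; rw [hexp y]
  obtain ⟨T, hTdef⟩ : ∃ t : ℝ, t = ∑ i : Fin m, 1 / μ i := ⟨_, rfl⟩
  have hT : 0 ≤ T := by
    rw [hTdef]
    exact Finset.sum_nonneg fun i _ => le_of_lt (one_div_pos.mpr (hμ i))
  obtain ⟨K0, hK0def⟩ : ∃ t : ℝ, t = |ρ/(m:ℝ)| * (η + A) + (η + A) := ⟨_, rfl⟩
  obtain ⟨C2, hC2def⟩ : ∃ t : ℝ,
      t = ∑ i : Fin m, lam i * (((η+A)/μ i)^2 + (3/2)*((η+A)/μ i)) := ⟨_, rfl⟩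
  obtain ⟨C, hCdef⟩ : ∃ t : ℝ, t = C2 + (m:ℝ) * K0 := ⟨_, rfl⟩
  obtain ⟨κ, hκdef⟩ : ∃ t : ℝ, t = min (η*(1-M)) A := ⟨_, rfl⟩
  have hκ : 0 < κ := by rw [hκdef]; exact lt_min (mul_pos hη (by linarith)) hA
  have hκ1 : κ ≤ η*(1-M) := hκdef ▸ min_le_left _ _
  have hκ2 : κ ≤ A := hκdef ▸ min_le_right _ _
  obtain ⟨C', hC'def⟩ : ∃ t : ℝ, t = max C 0 := ⟨_, rfl⟩
  have hC'0 : 0 ≤ C' := hC'def ▸ le_max_right _ _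
  have hCC' : C ≤ C' := hC'def ▸ le_max_left _ _
  obtain ⟨R0, hR0def⟩ : ∃ t : ℝ, t = 2*C'/κ := ⟨_, rfl⟩
  have hR0' : 0 ≤ R0 := by rw [hR0def]; exact div_nonneg (by linarith) hκ.le
  have hexpC' : 0 ≤ Real.exp ((η+A)*T*R0)*C' := mul_nonneg (Real.exp_pos _).le hC'0
  refine ⟨Real.exp ((η+A)*T*R0)*C' + 1, by linarith, κ/2, by linarith, ?_⟩
  intro x u hx hu
  obtain ⟨hu0, hu1⟩ := hu
  obtain ⟨S, hSdef⟩ : ∃ t : ℝ, t = max (∑ j, x j) 0 := ⟨_, rfl⟩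
  have hS0 : 0 ≤ S := hSdef ▸ le_max_right _ _
  rw [hfun, hexp x]
  have hgen : genL lam ρ μ γ u (fun y => Real.exp (Ffun cc dd y)) x
      = Real.exp (Ffun cc dd x) *
        ((∑ i, lam i * ((Gfun cc dd i (x i))^2 + GDfun cc dd i (x i)))
          + ∑ i, Gfun cc dd i (x i) * drift ρ μ γ x u i) := by
    unfold genL
    rw [fderiv_V_apply]
    have h1 : ∀ i ∈ Finset.univ, lam i * fderiv ℝ
        (fun y => fderiv ℝ (fun z => Real.exp (Ffun cc dd z)) y (Pi.single i 1))
        x (Pi.single i 1)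
        = Real.exp (Ffun cc dd x) *
          (lam i * ((Gfun cc dd i (x i))^2 + GDfun cc dd i (x i))) := by
      intro i _
      rw [second_deriv]
      ring
    rw [Finset.sum_congr rfl h1, ← Finset.mul_sum]
    ring
  rw [hgen]
  obtain ⟨E, hEdef⟩ : ∃ t : ℝ, t = Real.exp (Ffun cc dd x) := ⟨_, rfl⟩
  rw [← hEdef]
  have hE0 : 0 < E := by rw [hEdef]; exact Real.exp_pos _
  have hSb1 : ∑ i, lam i * ((Gfun cc dd i (x i))^2 + GDfun cc dd i (x i)) ≤ C2 := by
    rw [hC2def]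
    refine Finset.sum_le_sum (fun i _ => ?_)
    have hgG : Gfun cc dd i (x i) = η/μ i * psiD (x i) - A/μ i * psiD (-(x i)) := by
      simp [Gfun, hccdef, hdddef]
    have hgGD : GDfun cc dd i (x i) = η/μ i * psiDD (x i) + A/μ i * psiDD (-(x i)) := by
      simp [GDfun, hccdef, hdddef]
    rw [hgG, hgGD]
    exact mul_le_mul_of_nonneg_left (so_bound η A (μ i) (x i) hη hA (hμ i)) (hlam i).le
  obtain ⟨P, hPdef⟩ : ∃ t : ℝ, t = ∑ i, max (x i) 0 := ⟨_, rfl⟩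
  obtain ⟨N, hNdef⟩ : ∃ t : ℝ, t = ∑ i, max (-(x i)) 0 := ⟨_, rfl⟩
  have hP0 : 0 ≤ P := by
    rw [hPdef]; exact Finset.sum_nonneg fun i _ => le_max_right _ _
  have hN0 : 0 ≤ N := by
    rw [hNdef]; exact Finset.sum_nonneg fun i _ => le_max_right _ _
  have hSP : S ≤ P := by
    rw [hSdef, hPdef]
    exact max_le (Finset.sum_le_sum fun i _ => le_max_left _ _)
      (Finset.sum_nonneg fun i _ => le_max_right _ _)
  have hnorm : norm1 x = P + N := by
    rw [hPdef, hNdef, norm1, ← Finset.sum_add_distrib]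
    exact Finset.sum_congr rfl fun i _ => abs_eq_posneg (x i)
  have hn0 : 0 ≤ norm1 x := by rw [hnorm]; linarith
  have hSb2 : ∑ i, Gfun cc dd i (x i) * drift ρ μ γ x u i
      ≤ (m:ℝ)*K0 - η*P - A*N + η*M*S := by
    have step : ∀ i ∈ Finset.univ, Gfun cc dd i (x i) * drift ρ μ γ x u i
        ≤ (|ρ/(m:ℝ)| * (η + A) + (η + A)) - η * max (x i) 0 - A * max (-(x i)) 0
            + η*M*(S*u i) := by
      intro i _
      have hdr : drift ρ μ γ x u i
          = -((ρ/(m:ℝ)) * μ i) - μ i * (x i - S*u i) - γ i * (S*u i) := by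
        simp only [drift]
        rw [← hSdef]
        ring
      have hgG : Gfun cc dd i (x i) = η/μ i * psiD (x i) - A/μ i * psiD (-(x i)) := by
        simp [Gfun, hccdef, hdddef]
      rw [hdr, hgG]
      have hkey : (1 - γ i/μ i) * (η * psiD (x i) - A * psiD (-(x i))) ≤ η * M := by
        have hβlb2 : 1 - γ i/μ i ≤ M := by
          rw [hMdef]
          have h1 := hβi_lb i
          have h2 := le_max_left (1 - βmin) (1/2 : ℝ)
          linarith
        have hId : A * βmax = η * M := by
          rw [hAdef]; field_simp
        have h7 : γ i/μ i - 1 ≤ βmax := by linarith [hβi_ub i, hβmax_pos]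
        have h8 : (γ i/μ i - 1) * A ≤ βmax * A :=
          mul_le_mul_of_nonneg_right h7 hA.le
        have hABound : (γ i/μ i - 1) * A ≤ η * M := by
          have h9 : βmax * A = η * M := by rw [mul_comm]; exact hId
          linarith
        exact key_lemma η M A (γ i/μ i) (psiD (x i)) (psiD (-(x i))) hη hM0 hA.le
          hβlb2 hABound (psiD_nonneg _) (psiD_le_one _) (psiD_nonneg _) (psiD_le_one _)
      exact per_i_bound η A M (ρ/(m:ℝ)) (μ i) (γ i) (S*u i) (x i) (hμ i) hη hA
        (mul_nonneg hS0 (hu0 i)) hkey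
    refine le_trans (Finset.sum_le_sum step) (le_of_eq ?_)
    have hlast : ∑ i, η*M*(S*u i) = η*M*S := by
      calc ∑ i, η*M*(S*u i) = η*M*S*∑ i, u i := by
            rw [Finset.mul_sum]
            exact Finset.sum_congr rfl fun i _ => by ring
        _ = η*M*S := by rw [hu1, mul_one]
    rw [Finset.sum_add_distrib, Finset.sum_sub_distrib, Finset.sum_sub_distrib,
      Finset.sum_const, Finset.card_univ, Fintype.card_fin, nsmul_eq_mul, hlast,
      ← Finset.mul_sum, ← Finset.mul_sum, ← hPdef, ← hNdef, ← hK0def]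
  have hMS : η*M*S ≤ η*M*P :=
    mul_le_mul_of_nonneg_left hSP (by positivity)
  have hκP : κ*(P+N) ≤ η*(1-M)*P + A*N := by
    have h1 : κ*P ≤ (η*(1-M))*P := mul_le_mul_of_nonneg_right hκ1 hP0
    have h2 : κ*N ≤ A*N := mul_le_mul_of_nonneg_right hκ2 hN0
    have h3 : κ*(P+N) = κ*P + κ*N := by ring
    linarith
  have htot : (∑ i, lam i * ((Gfun cc dd i (x i))^2 + GDfun cc dd i (x i)))
      + ∑ i, Gfun cc dd i (x i) * drift ρ μ γ x u i ≤ C - κ * norm1 x := by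
    rw [hnorm, hCdef]
    linarith [hSb1, hSb2, hMS, hκP]
  have hgenle : E * ((∑ i, lam i * ((Gfun cc dd i (x i))^2 + GDfun cc dd i (x i)))
      + ∑ i, Gfun cc dd i (x i) * drift ρ μ γ x u i) ≤ E * (C - κ * norm1 x) :=
    mul_le_mul_of_nonneg_left htot hE0.le
  refine le_trans hgenle ?_
  have hring : E*(C - κ*norm1 x) + (κ/2)*(norm1 x)*E = E*(C-(κ/2)*(norm1 x)) := by
    ring
  rcases le_or_gt R0 (norm1 x) with hcase | hcase
  · have hcase2 : 2*C' ≤ norm1 x * κ := by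
      rw [hR0def] at hcase
      exact (div_le_iff₀ hκ).mp hcase
    have hκn : C' ≤ (κ/2)*norm1 x := by linarith
    have hnp : C - (κ/2)*norm1 x ≤ 0 := by linarith
    have hEnp : E*(C - (κ/2)*norm1 x) ≤ 0 :=
      mul_nonpos_of_nonneg_of_nonpos hE0.le hnp
    linarith [hexpC', hring, hEnp]
  · have hFb : Ffun cc dd x ≤ (η+A)*T*R0 := by
      have hstep : ∀ i ∈ Finset.univ, cc i * psiFn (x i) + dd i * psiFn (-(x i))
          ≤ ((η+A)*norm1 x) * (1/μ i) := by
        intro i _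
        have habs : |x i| ≤ norm1 x := by
          rw [norm1]
          exact Finset.single_le_sum (f := fun j => |x j|)
            (fun j _ => abs_nonneg _) (Finset.mem_univ i)
        have h1 : psiFn (x i) ≤ |x i| :=
          le_trans (psiFn_le _) (max_le (le_abs_self _) (abs_nonneg _))
        have h2 : psiFn (-(x i)) ≤ |x i| :=
          le_trans (psiFn_le _) (max_le (neg_le_abs _) (abs_nonneg _))
        have hcp : 0 ≤ η / μ i := le_of_lt (div_pos hη (hμ i))
        have hdp : 0 ≤ A / μ i := le_of_lt (div_pos hA (hμ i))
        calc cc i * psiFn (x i) + dd i * psiFn (-(x i))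
            ≤ (η/μ i) * |x i| + (A/μ i) * |x i| := by
              simp only [hccdef, hdddef]
              exact add_le_add (mul_le_mul_of_nonneg_left h1 hcp)
                (mul_le_mul_of_nonneg_left h2 hdp)
          _ ≤ (η/μ i) * norm1 x + (A/μ i) * norm1 x :=
              add_le_add (mul_le_mul_of_nonneg_left habs hcp)
                (mul_le_mul_of_nonneg_left habs hdp)
          _ = ((η+A)*norm1 x) * (1/μ i) := by ring
      have hsum2 := Finset.sum_le_sum hstep
      rw [← Finset.mul_sum, ← hTdef] at hsum2
      have hFf : Ffun cc dd x = ∑ i, (cc i * psiFn (x i) + dd i * psiFn (-(x i))) := rfl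
      rw [hFf]
      refine le_trans hsum2 ?_
      have h9 : (η+A)*norm1 x ≤ (η+A)*R0 :=
        mul_le_mul_of_nonneg_left hcase.le (by positivity)
      calc ((η+A)*norm1 x)*T ≤ ((η+A)*R0)*T := mul_le_mul_of_nonneg_right h9 hT
        _ = (η+A)*T*R0 := by ring
    have hEb : E ≤ Real.exp ((η+A)*T*R0) := by
      rw [hEdef]
      exact Real.exp_le_exp.mpr hFb
    have hκn2 : 0 ≤ (κ/2)*norm1 x := mul_nonneg (by linarith) hn0
    have h4 : C - (κ/2)*norm1 x ≤ C' := by linarith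
    have h5 : E*(C-(κ/2)*norm1 x) ≤ E*C' := mul_le_mul_of_nonneg_left h4 hE0.le
    have h6 : E*C' ≤ Real.exp ((η+A)*T*R0)*C' := mul_le_mul_of_nonneg_right hEb hC'0
    linarith
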